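/- Let 0 < ω < 1, set k = √(1 − ω²) and aₛ = √(1 − ω²)/ω, fix t₀ ∈ ℝ, and let u(x, t) = 4 arctan( aₛ sin(ω (t − t₀)) / cosh(k x) ). Then for every fixed t ∈ ℝ, the energy density x ↦ (1/2)(∂u/∂t(x,t))² + (1/2)(∂u/∂x(x,t))² + 1 − cos(u(x,t)) is a nonnegative function that is integrable over ℝ; that is, the static breather is a finite-energy solution of the sine-Gordon equation. -/

import Mathlib

open Real MeasureTheory

/-- The static breather `u(x,t) = 4 arctan(aₛ sin(ω(t − t₀)) / cosh(k x))`. -/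
noncomputable def staticBreather (aₛ k ω t₀ : ℝ) (x t : ℝ) : ℝ :=
  4 * Real.arctan (aₛ * Real.sin (ω * (t - t₀)) / Real.cosh (k * x))

/-- Energy density of the static breather at position `x` and time `t`:
`(1/2) u_t² + (1/2) u_x² + 1 − cos u`. -/
noncomputable def breatherEnergyDensity (aₛ k ω t₀ : ℝ) (x t : ℝ) : ℝ :=
  (1 / 2) * (deriv (fun s : ℝ => staticBreather aₛ k ω t₀ x s) t) ^ 2
    + (1 / 2) * (deriv (fun y : ℝ => staticBreather aₛ k ω t₀ y t) x) ^ 2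
    + (1 - Real.cos (staticBreather aₛ k ω t₀ x t))

/- ### Auxiliary lemmas -/

/-- `exp(-(b|x|))` is integrable over `ℝ` for `b > 0`. -/
lemma sg_integrable_exp_neg_mul_abs {b : ℝ} (hb : 0 < b) :
    Integrable (fun x : ℝ => Real.exp (-(b * |x|))) := by
  have hIoi : IntegrableOn (fun x : ℝ => Real.exp (-(b * |x|))) (Set.Ioi 0) := by
    refine (exp_neg_integrableOn_Ioi 0 hb).congr_fun (fun x hx => ?_) measurableSet_Ioi
    rw [abs_of_pos hx]; simp only [neg_mul]
  have hIic : IntegrableOn (fun x : ℝ => Real.exp (-(b * |x|))) (Set.Iic 0) := by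
    rw [← Measure.map_neg_eq_self (volume : Measure ℝ)]
    have m : MeasurableEmbedding fun x : ℝ => -x :=
      (Homeomorph.neg ℝ).measurableEmbedding
    rw [m.integrableOn_map_iff]
    simp_rw [Function.comp_def, abs_neg, Set.neg_preimage, Set.neg_Iic, neg_zero]
    exact Iff.mpr integrableOn_Ici_iff_integrableOn_Ioi hIoi
  rw [← integrableOn_univ, ← Set.Iic_union_Ioi (a := (0 : ℝ))]
  exact hIic.union hIoi

lemma sg_exp_abs_le_two_mul_cosh (y : ℝ) : Real.exp |y| ≤ 2 * Real.cosh y := by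
  rw [Real.cosh_eq]
  rcases abs_cases y with ⟨h, _⟩ | ⟨h, _⟩ <;> rw [h] <;>
    nlinarith [Real.exp_pos y, Real.exp_pos (-y)]

lemma sg_inv_cosh_sq_le {k : ℝ} (x : ℝ) (hk0 : 0 < k) :
    1 / Real.cosh (k * x) ^ 2 ≤ 4 * Real.exp (-(2 * k * |x|)) := by
  set c : ℝ := Real.cosh (k * x) with hc
  have hcpos : 0 < c := Real.cosh_pos _
  have hce : Real.exp (k * |x|) ≤ 2 * c := by
    have := sg_exp_abs_le_two_mul_cosh (k * x)
    rwa [abs_mul, abs_of_pos hk0] at this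
  have hE2 : Real.exp (-(2 * k * |x|)) *
      (Real.exp (k * |x|) * Real.exp (k * |x|)) = 1 := by
    rw [← Real.exp_add, ← Real.exp_add,
      show -(2 * k * |x|) + (k * |x| + k * |x|) = 0 by ring, Real.exp_zero]
  have hEE : Real.exp (k * |x|) * Real.exp (k * |x|) ≤ 4 * c ^ 2 := by
    nlinarith [Real.exp_pos (k * |x|)]
  rw [div_le_iff₀ (by positivity)]
  nlinarith [Real.exp_pos (-(2 * k * |x|)), hE2, hEE]

lemma sg_arctan_le_self {x : ℝ} (hx : 0 ≤ x) : Real.arctan x ≤ x := by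
  rcases eq_or_lt_of_le hx with h | h
  · simp [← h]
  · have h1 : 0 < Real.arctan x := by
      have := Real.arctan_strictMono h
      simpa using this
    have h2 := Real.lt_tan h1 (Real.arctan_lt_pi_div_two x)
    rw [Real.tan_arctan] at h2
    linarith

lemma sg_abs_arctan_le (x : ℝ) : |Real.arctan x| ≤ |x| := by
  rcases le_total 0 x with h | h
  · rw [abs_of_nonneg (by simpa using Real.arctan_strictMono.monotone h),
      abs_of_nonneg h]
    exact sg_arctan_le_self h
  · have h' : 0 ≤ -x := by linarith
    rw [abs_of_nonpos (by simpa using Real.arctan_strictMono.monotone h),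
      abs_of_nonpos h, ← Real.arctan_neg]
    exact sg_arctan_le_self h'

/-- Time derivative of the static breather. -/
lemma sg_hasDerivAt_time (aₛ k ω t₀ x t : ℝ) :
    HasDerivAt (fun s : ℝ => staticBreather aₛ k ω t₀ x s)
      (4 * (1 / (1 + (aₛ * Real.sin (ω * (t - t₀)) / Real.cosh (k * x)) ^ 2) *
        (aₛ * (Real.cos (ω * (t - t₀)) * (ω * 1)) / Real.cosh (k * x)))) t := by
  have h1 : HasDerivAt (fun s : ℝ => ω * (s - t₀)) (ω * 1) t :=
    ((hasDerivAt_id t).sub_const t₀).const_mul ω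
  have h2 : HasDerivAt (fun s : ℝ => Real.sin (ω * (s - t₀)))
      (Real.cos (ω * (t - t₀)) * (ω * 1)) t :=
    (Real.hasDerivAt_sin _).comp t h1
  have h3 := (h2.const_mul aₛ).div_const (Real.cosh (k * x))
  have h4 := (Real.hasDerivAt_arctan
      (aₛ * Real.sin (ω * (t - t₀)) / Real.cosh (k * x))).comp t h3
  exact h4.const_mul 4

/-- Spatial derivative of the static breather. -/
lemma sg_hasDerivAt_space (aₛ k ω t₀ x t : ℝ) :
    HasDerivAt (fun y : ℝ => staticBreather aₛ k ω t₀ y t)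
      (4 * (1 / (1 + (aₛ * Real.sin (ω * (t - t₀)) / Real.cosh (k * x)) ^ 2) *
        ((0 * Real.cosh (k * x) - aₛ * Real.sin (ω * (t - t₀)) *
          (Real.sinh (k * x) * (k * 1))) / Real.cosh (k * x) ^ 2))) x := by
  have hc : HasDerivAt (fun y : ℝ => Real.cosh (k * y))
      (Real.sinh (k * x) * (k * 1)) x :=
    (Real.hasDerivAt_cosh _).comp x ((hasDerivAt_id x).const_mul k)
  have hdiv := (hasDerivAt_const x (aₛ * Real.sin (ω * (t - t₀)))).div hc
    (ne_of_gt (Real.cosh_pos _))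
  have h4 := (Real.hasDerivAt_arctan
      (aₛ * Real.sin (ω * (t - t₀)) / Real.cosh (k * x))).comp x hdiv
  exact h4.const_mul 4

lemma sg_sq_mul_le {i y B : ℝ} (hi0 : 0 ≤ i) (hi1 : i ≤ 1) (hy : y ^ 2 ≤ B) :
    (i * y) ^ 2 ≤ B := by
  nlinarith [sq_nonneg y, mul_le_mul hi1 hi1 hi0 zero_le_one]

set_option maxHeartbeats 1000000 in
/-- Pointwise bound on the energy density. -/
lemma sg_density_le (aₛ k ω t₀ x t : ℝ) :
    breatherEnergyDensity aₛ k ω t₀ x t ≤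
      (8 * aₛ ^ 2 * ω ^ 2 + 8 * aₛ ^ 2 * k ^ 2 + 8 * aₛ ^ 2)
        / Real.cosh (k * x) ^ 2 := by
  unfold breatherEnergyDensity
  rw [(sg_hasDerivAt_time aₛ k ω t₀ x t).deriv,
    (sg_hasDerivAt_space aₛ k ω t₀ x t).deriv]
  unfold staticBreather
  set si : ℝ := Real.sin (ω * (t - t₀)) with hsi
  set co : ℝ := Real.cos (ω * (t - t₀)) with hco
  set s : ℝ := Real.sinh (k * x) with hs
  set c : ℝ := Real.cosh (k * x) with hc
  have hcpos : 0 < c := hc ▸ Real.cosh_pos _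
  have hc1 : 1 ≤ c := hc ▸ Real.one_le_cosh _
  have hsi2 : si ^ 2 ≤ 1 := hsi ▸ Real.sin_sq_le_one _
  have hco2 : co ^ 2 ≤ 1 := hco ▸ Real.cos_sq_le_one _
  have hs2 : s ^ 2 ≤ c ^ 2 := by
    have h1 : |s| < c := by
      rw [hs, hc, Real.abs_sinh]
      calc Real.sinh |k * x| < Real.cosh |k * x| := Real.sinh_lt_cosh _
        _ = Real.cosh (k * x) := Real.cosh_abs _
    nlinarith [abs_nonneg s, sq_abs s]
  set q : ℝ := aₛ * si / c with hq
  have hq1 : (0 : ℝ) < 1 + q ^ 2 := by positivity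
  have hinv0 : 0 ≤ 1 / (1 + q ^ 2) := by positivity
  have hinv1 : 1 / (1 + q ^ 2) ≤ 1 := by
    rw [div_le_one hq1]; nlinarith [sq_nonneg q]
  -- bound the time-derivative term
  have hDt2 : (4 * (1 / (1 + q ^ 2) * (aₛ * (co * (ω * 1)) / c))) ^ 2 ≤
      16 * aₛ ^ 2 * ω ^ 2 / c ^ 2 := by
    have e1 : 4 * (1 / (1 + q ^ 2) * (aₛ * (co * (ω * 1)) / c)) =
        (1 / (1 + q ^ 2)) * (4 * aₛ * co * ω / c) := by ring
    rw [e1]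
    refine sg_sq_mul_le hinv0 hinv1 ?_
    have e2 : (4 * aₛ * co * ω / c) ^ 2 = 16 * aₛ ^ 2 * co ^ 2 * ω ^ 2 / c ^ 2 := by
      ring
    rw [e2, div_le_div_iff₀ (by positivity) (by positivity)]
    nlinarith [hco2, sq_nonneg (aₛ * ω * c)]
  -- bound the space-derivative term
  have hDx2 : (4 * (1 / (1 + q ^ 2) *
      ((0 * c - aₛ * si * (s * (k * 1))) / c ^ 2))) ^ 2 ≤
      16 * aₛ ^ 2 * k ^ 2 / c ^ 2 := by
    have e1 : 4 * (1 / (1 + q ^ 2) * ((0 * c - aₛ * si * (s * (k * 1))) / c ^ 2)) =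
        (1 / (1 + q ^ 2)) * (-(4 * aₛ * si * k) * s / c ^ 2) := by ring
    rw [e1]
    refine sg_sq_mul_le hinv0 hinv1 ?_
    have e2 : (-(4 * aₛ * si * k) * s / c ^ 2) ^ 2 =
        16 * aₛ ^ 2 * si ^ 2 * k ^ 2 * s ^ 2 / (c ^ 2) ^ 2 := by ring
    rw [e2, div_le_div_iff₀ (by positivity) (by positivity)]
    have s1 : 16 * aₛ ^ 2 * si ^ 2 * k ^ 2 * s ^ 2 ≤ 16 * aₛ ^ 2 * k ^ 2 * s ^ 2 := by
      nlinarith [mul_nonneg (mul_nonneg (sq_nonneg aₛ) (sq_nonneg k)) (sq_nonneg s)]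
    have s2 : 16 * aₛ ^ 2 * k ^ 2 * s ^ 2 ≤ 16 * aₛ ^ 2 * k ^ 2 * c ^ 2 := by
      nlinarith [mul_nonneg (sq_nonneg aₛ) (sq_nonneg k)]
    nlinarith [mul_nonneg (mul_nonneg (mul_nonneg (by norm_num : (0:ℝ) ≤ 16)
      (sq_nonneg aₛ)) (sq_nonneg k)) (sq_nonneg c), sq_nonneg c,
      mul_le_mul_of_nonneg_right (s1.trans s2) (sq_nonneg c)]
  -- bound the potential term
  have hu : 1 - Real.cos (4 * Real.arctan q) ≤ 8 * aₛ ^ 2 / c ^ 2 := by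
    have h1 := Real.one_sub_sq_div_two_le_cos (x := 4 * Real.arctan q)
    have h3 : |Real.arctan q| ≤ |aₛ * si| / c := by
      have := sg_abs_arctan_le q
      rwa [hq, abs_div, abs_of_pos hcpos] at this
    have h4 : (4 * Real.arctan q) ^ 2 ≤ 16 * aₛ ^ 2 / c ^ 2 := by
      have h5 : (4 * Real.arctan q) ^ 2 ≤ (4 * (|aₛ * si| / c)) ^ 2 := by
        have h6 : |4 * Real.arctan q| ≤ 4 * (|aₛ * si| / c) := by
          rw [abs_mul, abs_of_nonneg (by norm_num : (0:ℝ) ≤ 4)]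
          exact mul_le_mul_of_nonneg_left h3 (by norm_num)
        calc (4 * Real.arctan q) ^ 2 = |4 * Real.arctan q| ^ 2 := (sq_abs _).symm
          _ ≤ (4 * (|aₛ * si| / c)) ^ 2 := by
              apply sq_le_sq' _ h6
              have := abs_nonneg (4 * Real.arctan q)
              linarith
      have e3 : (4 * (|aₛ * si| / c)) ^ 2 = 16 * (aₛ * si) ^ 2 / c ^ 2 := by
        rw [mul_pow, div_pow, sq_abs]; ring
      have h7 : 16 * (aₛ * si) ^ 2 / c ^ 2 ≤ 16 * aₛ ^ 2 / c ^ 2 := by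
        rw [div_le_div_iff₀ (by positivity) (by positivity)]
        nlinarith [hsi2, sq_nonneg (aₛ * c)]
      calc (4 * Real.arctan q) ^ 2 ≤ (4 * (|aₛ * si| / c)) ^ 2 := h5
        _ = 16 * (aₛ * si) ^ 2 / c ^ 2 := e3
        _ ≤ 16 * aₛ ^ 2 / c ^ 2 := h7
    rw [mul_div_assoc] at h4 ⊢
    linarith
  have e4 : (8 * aₛ ^ 2 * ω ^ 2 + 8 * aₛ ^ 2 * k ^ 2 + 8 * aₛ ^ 2) / c ^ 2 =
      (1 / 2) * (16 * aₛ ^ 2 * ω ^ 2 / c ^ 2) +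
      (1 / 2) * (16 * aₛ ^ 2 * k ^ 2 / c ^ 2) + 8 * aₛ ^ 2 / c ^ 2 := by ring
  rw [e4]
  linarith

/-- For `0 < ω < 1`, `k = √(1 − ω²)`, `aₛ = √(1 − ω²)/ω`, the energy density
of the static breather is nonnegative and integrable over `ℝ` at each fixed
time: the static breather has finite energy. -/
theorem staticBreather_finite_energy
    (ω k aₛ t₀ : ℝ) (hω0 : 0 < ω) (hω1 : ω < 1)
    (hk : k = Real.sqrt (1 - ω ^ 2)) (ha : aₛ = Real.sqrt (1 - ω ^ 2) / ω) :
    ∀ t : ℝ,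
      (∀ x : ℝ, 0 ≤ breatherEnergyDensity aₛ k ω t₀ x t)
      ∧ Integrable (fun x : ℝ => breatherEnergyDensity aₛ k ω t₀ x t) volume := by
  intro t
  have hk0 : 0 < k := by
    rw [hk]
    apply Real.sqrt_pos.mpr
    nlinarith
  have hnonneg : ∀ x : ℝ, 0 ≤ breatherEnergyDensity aₛ k ω t₀ x t := by
    intro x
    have h1 := Real.cos_le_one (staticBreather aₛ k ω t₀ x t)
    have h2 := sq_nonneg (deriv (fun s : ℝ => staticBreather aₛ k ω t₀ x s) t)
    have h3 := sq_nonneg (deriv (fun y : ℝ => staticBreather aₛ k ω t₀ y t) x)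
    unfold breatherEnergyDensity
    linarith
  refine ⟨hnonneg, ?_⟩
  set M : ℝ := (8 * aₛ ^ 2 * ω ^ 2 + 8 * aₛ ^ 2 * k ^ 2 + 8 * aₛ ^ 2) * 4 with hM
  have hbound : ∀ x : ℝ,
      breatherEnergyDensity aₛ k ω t₀ x t ≤ M * Real.exp (-(2 * k * |x|)) := by
    intro x
    calc breatherEnergyDensity aₛ k ω t₀ x t ≤
        (8 * aₛ ^ 2 * ω ^ 2 + 8 * aₛ ^ 2 * k ^ 2 + 8 * aₛ ^ 2)
          / Real.cosh (k * x) ^ 2 := sg_density_le aₛ k ω t₀ x t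
      _ = (8 * aₛ ^ 2 * ω ^ 2 + 8 * aₛ ^ 2 * k ^ 2 + 8 * aₛ ^ 2) *
            (1 / Real.cosh (k * x) ^ 2) := by ring
      _ ≤ (8 * aₛ ^ 2 * ω ^ 2 + 8 * aₛ ^ 2 * k ^ 2 + 8 * aₛ ^ 2) *
            (4 * Real.exp (-(2 * k * |x|))) :=
          mul_le_mul_of_nonneg_left (sg_inv_cosh_sq_le x hk0) (by positivity)
      _ = M * Real.exp (-(2 * k * |x|)) := by rw [hM]; ring
  -- continuity via the explicit formula
  have hfun : (fun x : ℝ => breatherEnergyDensity aₛ k ω t₀ x t) =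
      (fun x : ℝ =>
        (1 / 2) * (4 * (1 / (1 + (aₛ * Real.sin (ω * (t - t₀)) / Real.cosh (k * x)) ^ 2) *
          (aₛ * (Real.cos (ω * (t - t₀)) * (ω * 1)) / Real.cosh (k * x)))) ^ 2 +
        (1 / 2) * (4 * (1 / (1 + (aₛ * Real.sin (ω * (t - t₀)) / Real.cosh (k * x)) ^ 2) *
          ((0 * Real.cosh (k * x) - aₛ * Real.sin (ω * (t - t₀)) *
            (Real.sinh (k * x) * (k * 1))) / Real.cosh (k * x) ^ 2))) ^ 2 +
        (1 - Real.cos (4 * Real.arctan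
          (aₛ * Real.sin (ω * (t - t₀)) / Real.cosh (k * x))))) := by
    funext x
    unfold breatherEnergyDensity
    rw [(sg_hasDerivAt_time aₛ k ω t₀ x t).deriv,
      (sg_hasDerivAt_space aₛ k ω t₀ x t).deriv]
    rfl
  have hcoshc : Continuous (fun x : ℝ => Real.cosh (k * x)) :=
    Real.continuous_cosh.comp (continuous_const.mul continuous_id)
  have hsinhc : Continuous (fun x : ℝ => Real.sinh (k * x)) :=
    Real.continuous_sinh.comp (continuous_const.mul continuous_id)
  have hcne : ∀ x : ℝ, Real.cosh (k * x) ≠ 0 := fun x => (Real.cosh_pos _).ne'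
  have hqc : Continuous (fun x : ℝ =>
      aₛ * Real.sin (ω * (t - t₀)) / Real.cosh (k * x)) :=
    continuous_const.div hcoshc hcne
  have hinvc : Continuous (fun x : ℝ =>
      1 / (1 + (aₛ * Real.sin (ω * (t - t₀)) / Real.cosh (k * x)) ^ 2)) :=
    continuous_const.div (continuous_const.add (hqc.pow 2))
      (fun x => by positivity)
  have hcont : Continuous (fun x : ℝ => breatherEnergyDensity aₛ k ω t₀ x t) := by
    rw [hfun]
    refine Continuous.add (Continuous.add ?_ ?_) ?_
    · exact continuous_const.mul ((continuous_const.mul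
        (hinvc.mul (continuous_const.div hcoshc hcne))).pow 2)
    · refine continuous_const.mul ((continuous_const.mul (hinvc.mul ?_)).pow 2)
      exact ((continuous_const.mul hcoshc).sub
        ((continuous_const.mul (hsinhc.mul continuous_const)))).div
        (hcoshc.pow 2) (fun x => pow_ne_zero 2 (hcne x))
    · exact continuous_const.sub
        (Real.continuous_cos.comp (continuous_const.mul
          (Real.continuous_arctan.comp hqc)))
  have hg : Integrable (fun x : ℝ => M * Real.exp (-(2 * k * |x|))) :=
    (sg_integrable_exp_neg_mul_abs (by positivity : (0:ℝ) < 2 * k)).const_mul M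
  refine hg.mono' hcont.aestronglyMeasurable ?_
  filter_upwards with x
  rw [Real.norm_eq_abs, abs_of_nonneg (hnonneg x)]
  exact hbound x
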